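/- Let p, q, r be positive integers with 2 ≤ p < q < r satisfying pq + pr − qr = 1, and define Δ(y) = 4(2y − (q+r))² − 16(q+r)(p−1) and f(x,y) = −(q+r)x² + 4qxy − 4(q−p)y² − 4y. Then Δ is strictly decreasing on the interval [0, (p−1)/2] and Δ(y) < 4(q+r)² for all y in this interval. Consequently, for any integers a, m with −p ≤ a ≤ p, 0 ≤ m ≤ (p−1)/2, and f(a,m) ≥ f(1,1), one has |a(q+r) − 2qm| < q+r. -/
import Mathlib


/-- The quadratic function `f(x,y) = −(q+r)x² + 4qxy − 4(q−p)y² − 4y` as a real function. -/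
noncomputable def fR (p q r : ℕ) (x y : ℝ) : ℝ :=
  -((q : ℝ) + r) * x ^ 2 + 4 * q * x * y - 4 * ((q : ℝ) - p) * y ^ 2 - 4 * y

/-- The discriminant `Δ(y) = 4(2y − (q+r))² − 16(q+r)(p−1)` as a real function. -/
noncomputable def ΔR (p q r : ℕ) (y : ℝ) : ℝ :=
  4 * (2 * y - ((q : ℝ) + r)) ^ 2 - 16 * ((q : ℝ) + r) * ((p : ℝ) - 1)

/-- Let `p, q, r` be positive integers with `2 ≤ p < q < r` and
`pq + pr − qr = 1`. Then `Δ` is strictly decreasing on `[0, (p−1)/2]` and `Δ(y) < 4(q+r)²`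
there. Consequently, for integers `a, m` with `−p ≤ a ≤ p`, `0 ≤ m ≤ (p−1)/2`, and
`f(a,m) ≥ f(1,1)`, one has `|a(q+r) − 2qm| < q+r`. -/
theorem stmt_12 (p q r : ℕ) (hp : 2 ≤ p) (hpq : p < q) (hqr : q < r)
    (heq : (p : ℤ) * q + (p : ℤ) * r - (q : ℤ) * r = 1) :
    StrictAntiOn (ΔR p q r) (Set.Icc 0 (((p : ℝ) - 1) / 2)) ∧
    (∀ y ∈ Set.Icc (0 : ℝ) (((p : ℝ) - 1) / 2), ΔR p q r y < 4 * ((q : ℝ) + r) ^ 2) ∧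
    (∀ a m : ℤ, -(p : ℤ) ≤ a → a ≤ p → 0 ≤ m → 2 * m ≤ (p : ℤ) - 1 →
      fR p q r a m ≥ fR p q r 1 1 →
      |(a : ℝ) * ((q : ℝ) + r) - 2 * q * m| < (q : ℝ) + r) := by
  have hpR : (2 : ℝ) ≤ (p : ℝ) := by exact_mod_cast hp
  have hpqR : (p : ℝ) < q := by exact_mod_cast hpq
  have hqrR : (q : ℝ) < r := by exact_mod_cast hqr
  have heqR : (p : ℝ) * q + (p : ℝ) * r - (q : ℝ) * r = 1 := by exact_mod_cast heq
  have hQpos : (0 : ℝ) < (q : ℝ) + r := by linarith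
  refine ⟨?_, ?_, ?_⟩
  · intro y1 hy1 y2 hy2 h12
    simp only [Set.mem_Icc] at hy1 hy2
    unfold ΔR
    nlinarith [mul_pos (show (0:ℝ) < y2 - y1 by linarith)
      (show (0:ℝ) < ((q:ℝ) + r) - y1 - y2 by linarith)]
  · intro y hy
    simp only [Set.mem_Icc] at hy
    unfold ΔR
    nlinarith [mul_nonneg hy.1 (show (0:ℝ) ≤ ((q:ℝ) + r) - y by linarith),
      mul_pos hQpos (show (0:ℝ) < (p:ℝ) - 1 by linarith)]
  · intro a m ha1 ha2 hm1 hm2 hf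
    have hm1R : (0 : ℝ) ≤ (m : ℝ) := by exact_mod_cast hm1
    have hm2R : 2 * (m : ℝ) ≤ (p : ℝ) - 1 := by exact_mod_cast hm2
    have hMQ : (m : ℝ) ≤ (q : ℝ) + r := by linarith
    have hfQ : ((q : ℝ) + r) * fR p q r a m ≥ ((q : ℝ) + r) * fR p q r 1 1 :=
      mul_le_mul_of_nonneg_left hf (le_of_lt hQpos)
    have hM2 : (p : ℝ) * q * (m:ℝ)^2 + (p : ℝ) * r * (m:ℝ)^2 - (q : ℝ) * r * (m:ℝ)^2
        = (m:ℝ)^2 := by linear_combination (m:ℝ)^2 * heqR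
    have key : ((a : ℝ) * ((q : ℝ) + r) - 2 * q * m)^2 < ((q : ℝ) + r)^2 := by
      unfold fR at hfQ
      nlinarith [hfQ, hM2, heqR, mul_nonneg hm1R (sub_nonneg.2 hMQ),
        mul_pos (show (0:ℝ) < (q:ℝ) - 1 by linarith) (show (0:ℝ) < (r:ℝ) - 1 by linarith)]
    rw [abs_lt]
    constructor <;> nlinarith [key, hQpos]
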